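/- (Well posedness of b(f) for Sobolev functions.) Let 1 ≤ p < ∞ with conjugate exponent q, let f ∈ W^{1,p}(X,d,m), and let L_f and L̃_f be two linear maps each satisfying the defining conditions of W^{1,p} for f. Then for every b ∈ Der^q_q one has L_f(b) = L̃_f(b) m-almost everywhere; this common value is denoted b(f). -/

import Mathlib

open MeasureTheory Metric Filter Set
open scoped ENNReal NNReal Topology

noncomputable section

namespace DiMarino

/-- Real Lipschitz functions on `X` with bounded support. -/
def Lip0 (X : Type*) [MetricSpace X] : Set (X → ℝ) :=
  {f | (∃ K, LipschitzWith K f) ∧ Bornology.IsBounded (tsupport f)}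

/-- Bounded real Lipschitz functions on `X`. -/
def LipB (X : Type*) [MetricSpace X] : Set (X → ℝ) :=
  {f | (∃ K, LipschitzWith K f) ∧ ∃ M, ∀ x, |f x| ≤ M}

variable {X : Type*} [MetricSpace X]

/-- The Lipschitz constant of `f` on the set `s`, as an element of `ℝ≥0∞`. -/
def lipOn (f : X → ℝ) (s : Set X) : ℝ≥0∞ :=
  ⨆ x ∈ s, ⨆ y ∈ s, edist (f x) (f y) / edist x y

/-- The asymptotic Lipschitz constant `lip_a f (x) = lim_{r→0⁺} Lip (f, B_r(x))`
(the limit is an infimum by monotonicity). -/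
def lipA (f : X → ℝ) (x : X) : ℝ :=
  (⨅ (r : ℝ) (_ : 0 < r), lipOn f (ball x r)).toReal

/-- The asymptotic Lipschitz constant of the restriction `f|_C` at `x`. -/
def lipAOn (f : X → ℝ) (C : Set X) (x : X) : ℝ :=
  (⨅ (r : ℝ) (_ : 0 < r), lipOn f (C ∩ ball x r)).toReal

variable [MeasurableSpace X]

/-- A metric derivation: a linear map from `Lip_0(X,d)` to `L^0(X,m)` satisfying the
Leibniz rule and weak locality `|b(f)| ≤ g · lip_a f`. -/
structure MDerivation (X : Type*) [MetricSpace X] [MeasurableSpace X]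
    (m : Measure X) where
  toFun : (X → ℝ) → X → ℝ
  aemeasurable' : ∀ f ∈ Lip0 X, AEMeasurable (toFun f) m
  map_add' : ∀ f ∈ Lip0 X, ∀ g ∈ Lip0 X, toFun (f + g) =ᵐ[m] toFun f + toFun g
  map_smul' : ∀ (c : ℝ), ∀ f ∈ Lip0 X, toFun (c • f) =ᵐ[m] c • toFun f
  leibniz' : ∀ f ∈ Lip0 X, ∀ g ∈ Lip0 X,
    toFun (f * g) =ᵐ[m] toFun f * g + f * toFun g
  locality' : ∃ g : X → ℝ, AEMeasurable g m ∧ (∀ᵐ x ∂m, 0 ≤ g x) ∧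
    ∀ f ∈ Lip0 X, ∀ᵐ x ∂m, |toFun f x| ≤ g x * lipA f x

/-- `g` is a locality function for the derivation `b`, i.e. `|b(f)| ≤ g · lip_a f`
`m`-a.e. for every `f ∈ Lip_0(X,d)`. -/
def IsLocality (m : Measure X) (b : MDerivation X m) (g : X → ℝ) : Prop :=
  AEMeasurable g m ∧ (∀ᵐ x ∂m, 0 ≤ g x) ∧
    ∀ f ∈ Lip0 X, ∀ᵐ x ∂m, |b.toFun f x| ≤ g x * lipA f x

/-- `g` is the (`m`-a.e.) minimal locality function of `b`; it is denoted `|b|`. -/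
def IsMinimalLocality (m : Measure X) (b : MDerivation X m) (g : X → ℝ) : Prop :=
  IsLocality m b g ∧ ∀ g', IsLocality m b g' → ∀ᵐ x ∂m, g x ≤ g' x

/-- `h` is the divergence of the derivation `b`:
`-∫ b(f) dm = ∫ h f dm` for every `f ∈ Lip_0(X,d)`. -/
def IsDivergence (m : Measure X) (b : MDerivation X m) (h : X → ℝ) : Prop :=
  AEMeasurable h m ∧ ∀ f ∈ Lip0 X, Integrable (b.toFun f) m ∧
    Integrable (fun x => h x * f x) m ∧
    (-∫ x, b.toFun f x ∂m) = ∫ x, h x * f x ∂m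

/-- `Der^{p₁}_{p₂}(X,d,m)`: derivations with `|b| ∈ L^{p₁}` and `div b ∈ L^{p₂}`. -/
def DerSet (m : Measure X) (p₁ p₂ : ℝ≥0∞) : Set (MDerivation X m) :=
  {b | (∃ g, IsLocality m b g ∧ MemLp g p₁ m) ∧ ∃ h, MemLp h p₂ m ∧ IsDivergence m b h}

/-- `Der_b`: derivations with `|b| ∈ L^∞`. -/
def DerB (m : Measure X) : Set (MDerivation X m) :=
  {b | ∃ g, IsLocality m b g ∧ MemLp g ∞ m}

/-- `L^1_loc` in a metric measure space: integrable on bounded sets. -/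
def LocInt (m : Measure X) (g : X → ℝ) : Prop :=
  AEMeasurable g m ∧ ∀ s : Set X, Bornology.IsBounded s → IntegrableOn g s m

/-- `D(div)`: derivations with `|b|` and `div b` in `L^1_loc(X,m)`. -/
def DDiv (m : Measure X) : Set (MDerivation X m) :=
  {b | (∃ g, IsLocality m b g ∧ LocInt m g) ∧ ∃ h, LocInt m h ∧ IsDivergence m b h}

/-- `bu` represents the value `b(u)` of the canonical extension of the derivation `b`
to locally Lipschitz functions: on the interior of any set where a cutoff `χ ∈ Lip_0`
equals `1`, `b(u)` agrees with `b(χ·u)`. -/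
def IsExtension (m : Measure X) (b : MDerivation X m) (u : X → ℝ) (bu : X → ℝ) : Prop :=
  AEMeasurable bu m ∧
    ∀ χ ∈ Lip0 X, ∀ᵐ x ∂m, x ∈ interior {y | χ y = 1} → bu x = b.toFun (χ * u) x

/-- `C` is an admissible continuity constant for `L_f` with respect to the `Der^q` norm. -/
def ContBound (m : Measure X) (q : ℝ≥0∞) (Lf : MDerivation X m → X → ℝ) (C : ℝ) : Prop :=
  ∀ b ∈ DerSet m q q, ∀ g, IsLocality m b g →
    ∫ x, |Lf b x| ∂m ≤ C * (eLpNorm g q m).toReal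

/-- `L_f` realizes `f` as a Sobolev function: a linear, `Der^q`-norm continuous,
`Lip_b`-linear map `L_f : Der^q_q → L^1(X,m)` with
`∫ L_f(b) dm = -∫ f · div b dm`; for `p = 1` it moreover extends `L^∞`-linearly
to `L^∞ · Der_L`. -/
structure IsSobolevRep (m : Measure X) (p q : ℝ≥0∞) (f : X → ℝ)
    (Lf : MDerivation X m → X → ℝ) : Prop where
  integrable : ∀ b ∈ DerSet m q q, Integrable (Lf b) m
  ibp : ∀ b ∈ DerSet m q q, ∀ d, IsDivergence m b d →
    ∫ x, Lf b x ∂m = -∫ x, f x * d x ∂m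
  map_add : ∀ b₁ ∈ DerSet m q q, ∀ b₂ ∈ DerSet m q q, ∀ b₃ ∈ DerSet m q q,
    (∀ g ∈ Lip0 X, b₃.toFun g =ᵐ[m] b₁.toFun g + b₂.toFun g) →
    Lf b₃ =ᵐ[m] Lf b₁ + Lf b₂
  map_smul : ∀ (c : ℝ), ∀ b₁ ∈ DerSet m q q, ∀ b₂ ∈ DerSet m q q,
    (∀ g ∈ Lip0 X, b₂.toFun g =ᵐ[m] c • b₁.toFun g) → Lf b₂ =ᵐ[m] c • Lf b₁
  bounded : ∃ C : ℝ, 0 ≤ C ∧ ContBound m q Lf C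
  lipb_linear : ∀ h ∈ LipB X, ∀ b ∈ DerSet m q q, ∀ b' ∈ DerSet m q q,
    (∀ g ∈ Lip0 X, b'.toFun g =ᵐ[m] fun x => h x * b.toFun g x) →
    Lf b' =ᵐ[m] fun x => h x * Lf b x
  extend_one : p = 1 → ∃ Lf' : MDerivation X m → X → ℝ,
    (∀ b ∈ DerSet m ∞ ∞, Lf' b =ᵐ[m] Lf b) ∧
    ∀ u : X → ℝ, MemLp u ∞ m → ∀ b ∈ DerSet m ∞ ∞, ∀ b' : MDerivation X m,
      (∀ g ∈ Lip0 X, b'.toFun g =ᵐ[m] fun x => u x * b.toFun g x) →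
      Lf' b' =ᵐ[m] fun x => u x * Lf' b x

/-- `f ∈ W^{1,p}(X,d,m)` (definition via derivations). -/
def MemW1p (m : Measure X) (p q : ℝ≥0∞) (f : X → ℝ) : Prop :=
  MemLp f p m ∧ ∃ Lf, IsSobolevRep m p q f Lf

/-- `gf` dominates `L_f`: `|b(f)| ≤ gf · |b|` `m`-a.e. for every `b ∈ Der^q_q`. -/
def IsGradientBound (m : Measure X) (q : ℝ≥0∞) (Lf : MDerivation X m → X → ℝ)
    (gf : X → ℝ) : Prop :=
  ∀ b ∈ DerSet m q q, ∀ gb, IsMinimalLocality m b gb →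
    ∀ᵐ x ∂m, |Lf b x| ≤ gf x * gb x

/-- `gf` is the `p`-weak gradient `|∇f|_p` : the `m`-a.e. least nonnegative `L^p`
function with `|b(f)| ≤ gf · |b|` for all `b ∈ Der^q_q`. -/
def IsMinimalPGradient (m : Measure X) (p q : ℝ≥0∞) (Lf : MDerivation X m → X → ℝ)
    (gf : X → ℝ) : Prop :=
  MemLp gf p m ∧ (∀ᵐ x ∂m, 0 ≤ gf x) ∧ IsGradientBound m q Lf gf ∧
    ∀ gf', MemLp gf' p m → (∀ᵐ x ∂m, 0 ≤ gf' x) → IsGradientBound m q Lf gf' →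
      ∀ᵐ x ∂m, gf x ≤ gf' x

/-- `g` is a relaxed gradient of `f`: some `f_n ∈ Lip_0` converge to `f` in `L^p` with
`lip_a f_n → g` in `L^p`. -/
def IsRelaxedGradient (m : Measure X) (p : ℝ≥0∞) (f g : X → ℝ) : Prop :=
  MemLp g p m ∧ ∃ fn : ℕ → X → ℝ, (∀ n, fn n ∈ Lip0 X) ∧
    Tendsto (fun n => eLpNorm (fn n - f) p m) atTop (𝓝 0) ∧
    Tendsto (fun n => eLpNorm (fun x => lipA (fn n) x - g x) p m) atTop (𝓝 0)

/-- `f ∈ W^{1,p}_*(X,d,m)` (relaxed Sobolev space). -/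
def MemW1pStar (m : Measure X) (p : ℝ≥0∞) (f : X → ℝ) : Prop :=
  MemLp f p m ∧ ∃ g, IsRelaxedGradient m p f g

/-- `g = |∇f|_{p,*}`: a relaxed gradient of minimal `L^p` norm. -/
def IsMinimalRelaxedGradient (m : Measure X) (p : ℝ≥0∞) (f g : X → ℝ) : Prop :=
  IsRelaxedGradient m p f g ∧
    ∀ g', IsRelaxedGradient m p f g' → eLpNorm g p m ≤ eLpNorm g' p m

end DiMarino

/-- The curve space `C([0,1],X)` is endowed with the Borel σ-algebra of the sup metric. -/
instance {X : Type*} [MetricSpace X] : MeasurableSpace C(unitInterval, X) := borel _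
instance {X : Type*} [MetricSpace X] : BorelSpace C(unitInterval, X) := ⟨rfl⟩

namespace DiMarino

variable {X : Type*} [MetricSpace X]

/-- The canonical extension of a curve `γ : [0,1] → X` to `ℝ`, constant outside `[0,1]`. -/
def extC (γ : C(unitInterval, X)) : ℝ → X :=
  fun t => γ (Set.projIcc 0 1 zero_le_one t)

/-- `γ` has metric speed `v` at time `t`. -/
def HasMetricSpeedAt (γ : ℝ → X) (t v : ℝ) : Prop :=
  Tendsto (fun h : ℝ => dist (γ (t + h)) (γ t) / |h|) (𝓝[≠] 0) (𝓝 v)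

variable [MeasurableSpace X]

/-- `π` is a `q`-test plan with compression constant `Cpi`, and `spd γ t` is
the metric speed `|γ̇_t|`: `π` is a probability measure concentrated on `AC^q`
curves, with `q`-energy `‖ ‖γ̇‖_{L^q(0,1)} ‖_{L^q(π)}` finite and
`(e_t)_♯ π ≤ Cpi · m` for all `t ∈ [0,1]`. -/
structure IsTestPlan (m : Measure X) (q : ℝ≥0∞) (π : Measure C(unitInterval, X))
    (spd : C(unitInterval, X) → ℝ → ℝ) (Cpi : ℝ≥0∞) : Prop where
  prob : IsProbabilityMeasure π
  cfin : Cpi ≠ ∞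
  spd_meas : AEMeasurable (fun p : C(unitInterval, X) × ℝ => spd p.1 p.2)
    (π.prod (volume.restrict (Set.Ioo (0:ℝ) 1)))
  spd_nonneg : ∀ᵐ γ ∂π, ∀ᵐ t ∂(volume.restrict (Set.Ioo (0:ℝ) 1)), 0 ≤ spd γ t
  speed : ∀ᵐ γ ∂π, ∀ᵐ t ∂(volume.restrict (Set.Ioo (0:ℝ) 1)),
    HasMetricSpeedAt (extC γ) t (spd γ t)
  ac : ∀ᵐ γ ∂π, (∀ s t : ℝ, 0 ≤ s → s ≤ t → t ≤ 1 →
    IntegrableOn (spd γ) (Set.Ioc s t) volume ∧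
    dist (extC γ s) (extC γ t) ≤ ∫ u in Set.Ioc s t, spd γ u)
  energy : eLpNorm
    (fun γ => (eLpNorm (spd γ) q (volume.restrict (Set.Ioo (0:ℝ) 1))).toReal) q π < ∞
  compression : ∀ t : unitInterval, Measure.map (fun γ => γ t) π ≤ Cpi • m

/-- `g` is a `p`-weak upper gradient of `f`:
`|f(γ₁) - f(γ₀)| ≤ ∫_γ g ds < ∞` for `p`-a.e. curve, i.e. π-a.e. for all `q`-test plans. -/
def IsWeakUpperGradient (m : Measure X) (q : ℝ≥0∞) (f g : X → ℝ) : Prop :=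
  ∀ (π : Measure C(unitInterval, X)) (spd : C(unitInterval, X) → ℝ → ℝ) (Cpi : ℝ≥0∞),
    IsTestPlan m q π spd Cpi →
    ∀ᵐ γ ∂π, IntegrableOn (fun t => g (extC γ t) * spd γ t) (Set.Ioo (0:ℝ) 1) volume ∧
      |f (extC γ 1) - f (extC γ 0)| ≤ ∫ t in Set.Ioo (0:ℝ) 1, g (extC γ t) * spd γ t

/-- `f ∈ W^{1,p}_w(X,d,m)` (Sobolev space via weak upper gradients). -/
def MemW1pw (m : Measure X) (p q : ℝ≥0∞) (f : X → ℝ) : Prop :=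
  MemLp f p m ∧ ∃ g, MemLp g p m ∧ (∀ᵐ x ∂m, 0 ≤ g x) ∧ IsWeakUpperGradient m q f g

/-- `g = |∇f|_{p,w}`: the `m`-a.e. minimal `p`-weak upper gradient of `f`. -/
def IsMinimalWeakUpperGradient (m : Measure X) (p q : ℝ≥0∞) (f g : X → ℝ) : Prop :=
  MemLp g p m ∧ (∀ᵐ x ∂m, 0 ≤ g x) ∧ IsWeakUpperGradient m q f g ∧
    ∀ g', MemLp g' p m → (∀ᵐ x ∂m, 0 ≤ g' x) → IsWeakUpperGradient m q f g' →
      ∀ᵐ x ∂m, g x ≤ g' x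

/-- The upper semicontinuous envelope (relative to `m`-a.e. domination by bounded
continuous functions) of `g`. -/
def uscEnvAE (m : Measure X) (g : X → ℝ) (x : X) : ℝ :=
  sInf {y : ℝ | ∃ h : X → ℝ, Continuous h ∧ (∃ M, ∀ z, |h z| ≤ M) ∧
    (∀ᵐ z ∂m, g z ≤ h z) ∧ y = h x}

/-- `ν' = h · ν` for a signed measure `ν` and a function `h`. -/
def IsDensitySM (ν' ν : SignedMeasure X) (h : X → ℝ) : Prop :=
  ∀ A : Set X, MeasurableSet A →
    ν' A = (∫ x in A, h x ∂ν.toJordanDecomposition.posPart)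
      - ∫ x in A, h x ∂ν.toJordanDecomposition.negPart

/-- `L_f` realizes `f` as a `BV` function: a linear map `L_f : Der_b → M(X)`,
continuous for the `Der^∞` norm, `C_b(X)`-linear, with
`L_f(b)(X) = -∫ f · div b dm` for all `b ∈ Der_L`. -/
structure IsBVRep (m : Measure X) (f : X → ℝ)
    (Lf : MDerivation X m → SignedMeasure X) : Prop where
  ibp : ∀ b ∈ DerSet m ∞ ∞, ∀ d, IsDivergence m b d →
    Lf b Set.univ = -∫ x, f x * d x ∂m
  map_add : ∀ b₁ ∈ DerB m, ∀ b₂ ∈ DerB m, ∀ b₃ ∈ DerB m,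
    (∀ g ∈ Lip0 X, b₃.toFun g =ᵐ[m] b₁.toFun g + b₂.toFun g) → Lf b₃ = Lf b₁ + Lf b₂
  map_smul : ∀ (c : ℝ), ∀ b₁ ∈ DerB m, ∀ b₂ ∈ DerB m,
    (∀ g ∈ Lip0 X, b₂.toFun g =ᵐ[m] c • b₁.toFun g) → Lf b₂ = c • Lf b₁
  bounded : ∃ C : ℝ, 0 ≤ C ∧ ∀ b ∈ DerB m, ∀ g, IsLocality m b g →
    ((Lf b).totalVariation Set.univ).toReal ≤ C * (eLpNorm g ∞ m).toReal
  cb_linear : ∀ h : X → ℝ, Continuous h → (∃ M, ∀ x, |h x| ≤ M) →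
    ∀ b ∈ DerB m, ∀ b' ∈ DerB m,
      (∀ g ∈ Lip0 X, b'.toFun g =ᵐ[m] fun x => h x * b.toFun g x) →
      IsDensitySM (Lf b') (Lf b) h

/-- `f ∈ BV(X,d,m)` (definition via derivations). -/
def MemBV (m : Measure X) (f : X → ℝ) : Prop :=
  MemLp f 1 m ∧ ∃ Lf, IsBVRep m f Lf

/-- `ν` is a finite measure dominating `L_f`:
`Df(b)(A) ≤ ∫_A |b|^* dν` for every Borel `A` and `b ∈ Der_L`. -/
def IsTVBound (m : Measure X) (Lf : MDerivation X m → SignedMeasure X)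
    (ν : Measure X) : Prop :=
  IsFiniteMeasure ν ∧ ∀ A : Set X, MeasurableSet A → ∀ b ∈ DerSet m ∞ ∞,
    ∀ gb, IsMinimalLocality m b gb → Lf b A ≤ ∫ x in A, uscEnvAE m gb x ∂ν

/-- `ν = |Df|`: the least finite measure dominating `L_f`. -/
def IsTotalVariation (m : Measure X) (Lf : MDerivation X m → SignedMeasure X)
    (ν : Measure X) : Prop :=
  IsTVBound m Lf ν ∧ ∀ ν', IsTVBound m Lf ν' → ν ≤ ν'

/-- `ν` is a weak-* limit, in duality with `C_b(X)`, of measures `lip_a(f_n) m` with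
`f_n ∈ Lip_0` converging to `f` in `L^1`. -/
def IsStarLimit (m : Measure X) (f : X → ℝ) (ν : Measure X) : Prop :=
  IsFiniteMeasure ν ∧ ∃ fn : ℕ → X → ℝ, (∀ n, fn n ∈ Lip0 X) ∧
    Tendsto (fun n => eLpNorm (fn n - f) 1 m) atTop (𝓝 0) ∧
    ∀ h : X → ℝ, Continuous h → (∃ M, ∀ x, |h x| ≤ M) →
      Tendsto (fun n => ∫ x, h x * lipA (fn n) x ∂m) atTop (𝓝 (∫ x, h x ∂ν))

/-- `f ∈ BV_*(X,d,m)` (relaxed BV space). -/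
def MemBVStar (m : Measure X) (f : X → ℝ) : Prop :=
  MemLp f 1 m ∧ ∃ ν, IsStarLimit m f ν

/-- `ν = |Df|_*`: the minimal relaxed total variation measure. -/
def IsMinimalStarLimit (m : Measure X) (f : X → ℝ) (ν : Measure X) : Prop :=
  IsStarLimit m f ν ∧ ∀ ν', IsStarLimit m f ν' → ν ≤ ν'

/-- The essential total variation of `f` along the curve `γ`. -/
def essVarAlong (f : X → ℝ) (γ : C(unitInterval, X)) : ℝ≥0∞ :=
  ⨅ (g : ℝ → ℝ) (_ : ∀ᵐ t ∂(volume.restrict (Set.Icc (0:ℝ) 1)), g t = f (extC γ t)),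
    eVariationOn g (Set.Icc (0:ℝ) 1)

/-- `μ` is an admissible weak total variation measure for `f` in the sense of
Ambrosio–Di Marino: along every `∞`-test plan, `f` has finite essential variation on
a.e. curve and the (localized) integrated variation is bounded by
`C(π) ‖Lip γ‖_{L^∞(π)} μ`. -/
def IsWBVMeasure (m : Measure X) (f : X → ℝ) (μ : Measure X) : Prop :=
  IsFiniteMeasure μ ∧
  ∀ (π : Measure C(unitInterval, X)) (spd : C(unitInterval, X) → ℝ → ℝ) (Cpi : ℝ≥0∞),
    IsTestPlan m ∞ π spd Cpi →
    (∀ᵐ γ ∂π, essVarAlong f γ < ∞) ∧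
    ∀ A : Set X, IsOpen A →
      ∫⁻ γ in {γ | ∀ t : unitInterval, γ t ∈ A}, essVarAlong f γ ∂π ≤
        Cpi * eLpNorm
          (fun γ => (eLpNorm (spd γ) ∞ (volume.restrict (Set.Ioo (0:ℝ) 1))).toReal) ∞ π
          * μ A

/-- `f ∈ w-BV(X,d,m)`. -/
def MemWBV (m : Measure X) (f : X → ℝ) : Prop :=
  MemLp f 1 m ∧ ∃ μ, IsWBVMeasure m f μ

/-- `μ = |Df|_w`: the minimal weak total variation measure. -/
def IsMinimalWBVMeasure (m : Measure X) (f : X → ℝ) (μ : Measure X) : Prop :=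
  IsWBVMeasure m f μ ∧ ∀ μ', IsWBVMeasure m f μ' → μ ≤ μ'


section Statement4Aux

variable {X : Type*} [MetricSpace X]

theorem lipA_nonneg' (f : X → ℝ) (x : X) : 0 ≤ lipA f x := ENNReal.toReal_nonneg

theorem lipOn_le' {K : ℝ≥0} {h : X → ℝ} (hh : LipschitzWith K h) (s : Set X) :
    lipOn h s ≤ (K : ℝ≥0∞) := by
  refine iSup₂_le fun x _ => iSup₂_le fun y _ => ?_
  exact ENNReal.div_le_of_le_mul (hh x y)

theorem lipA_le_of_eqOn_ball' {u h : X → ℝ} {K : ℝ≥0} {x : X} {r : ℝ} (hr : 0 < r)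
    (heq : Set.EqOn u h (ball x r)) (hh : LipschitzWith K h) : lipA u x ≤ (K : ℝ) := by
  have h1 : lipOn u (ball x r) ≤ (K : ℝ≥0∞) := by
    refine iSup₂_le fun a ha => iSup₂_le fun b hb => ?_
    rw [show u a = h a from heq ha, show u b = h b from heq hb]
    exact ENNReal.div_le_of_le_mul (hh a b)
  have h2 : (⨅ (r' : ℝ) (_ : 0 < r'), lipOn u (ball x r')) ≤ (K : ℝ≥0∞) :=
    le_trans (biInf_le _ hr) h1
  calc lipA u x ≤ ((K : ℝ≥0∞)).toReal := ENNReal.toReal_mono ENNReal.coe_ne_top h2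
  _ = (K : ℝ) := ENNReal.coe_toReal _

theorem lip0_zero' : (0 : X → ℝ) ∈ Lip0 X := by
  refine ⟨⟨0, LipschitzWith.const' 0⟩, ?_⟩
  have : tsupport (0 : X → ℝ) = ∅ := by
    simp [tsupport, Function.support_zero]
  rw [this]; exact Bornology.isBounded_empty

theorem lip0_sub' {u v : X → ℝ} (hu : u ∈ Lip0 X) (hv : v ∈ Lip0 X) : u - v ∈ Lip0 X := by
  obtain ⟨⟨Ku, hKu⟩, hbu⟩ := hu
  obtain ⟨⟨Kv, hKv⟩, hbv⟩ := hv
  refine ⟨⟨Ku + Kv, hKu.sub hKv⟩, ?_⟩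
  refine (hbu.union hbv).subset ?_
  refine (closure_mono (Function.support_sub u v)).trans ?_
  rw [closure_union]
  exact subset_rfl

theorem lip0_bounded' [Nonempty X] {u : X → ℝ} (hu : u ∈ Lip0 X) :
    ∃ M, 0 ≤ M ∧ ∀ x, |u x| ≤ M := by
  obtain ⟨⟨K, hK⟩, hb⟩ := hu
  obtain x0 := Classical.arbitrary X
  obtain ⟨R, hR⟩ := hb.subset_ball x0
  refine ⟨(K : ℝ) * max R 0 + |u x0|, by positivity, fun x => ?_⟩
  by_cases hx : u x = 0
  · rw [hx, abs_zero]; positivity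
  · have hmem : x ∈ Metric.ball x0 R := hR (subset_tsupport u hx)
    have hd : dist x x0 < R := mem_ball.1 hmem
    have h1 : |u x - u x0| ≤ (K : ℝ) * dist x x0 := by
      have := hK.dist_le_mul x x0
      rwa [Real.dist_eq] at this
    have h2 : |u x| ≤ |u x - u x0| + |u x0| := by
      have := abs_add_le (u x - u x0) (u x0); simpa using this
    have h3 : (K : ℝ) * dist x x0 ≤ (K : ℝ) * max R 0 := by
      apply mul_le_mul_of_nonneg_left _ (K.coe_nonneg)
      exact le_trans (le_of_lt hd) (le_max_left _ _)
    linarith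

theorem lip0_mem_lipB' [Nonempty X] {u : X → ℝ} (hu : u ∈ Lip0 X) : u ∈ LipB X :=
  ⟨hu.1, (lip0_bounded' hu).imp fun _ h => h.2⟩

theorem lipschitz_mul_of_bounded' {h u : X → ℝ} {Kh Ku : ℝ≥0} {Mh Mu : ℝ}
    (hh : LipschitzWith Kh h) (hu : LipschitzWith Ku u) (hMh0 : 0 ≤ Mh) (hMu0 : 0 ≤ Mu)
    (hMh : ∀ x, |h x| ≤ Mh) (hMu : ∀ x, |u x| ≤ Mu) :
    ∃ K : ℝ≥0, LipschitzWith K (h * u) := by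
  have h0 : 0 ≤ Mh * (Ku : ℝ) + Mu * (Kh : ℝ) := by positivity
  refine ⟨⟨Mh * (Ku : ℝ) + Mu * (Kh : ℝ), h0⟩, LipschitzWith.of_dist_le_mul fun x y => ?_⟩
  have key : dist ((h * u) x) ((h * u) y) ≤ |h x| * dist (u x) (u y) + |u y| * dist (h x) (h y) := by
    simp only [Pi.mul_apply, Real.dist_eq]
    have e : h x * u x - h y * u y = h x * (u x - u y) + u y * (h x - h y) := by ring
    rw [e]
    refine (abs_add_le _ _).trans ?_
    rw [abs_mul, abs_mul]
  have b1 : |h x| * dist (u x) (u y) ≤ Mh * ((Ku : ℝ) * dist x y) :=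
    mul_le_mul (hMh x) (hu.dist_le_mul x y) dist_nonneg hMh0
  have b2 : |u y| * dist (h x) (h y) ≤ Mu * ((Kh : ℝ) * dist x y) :=
    mul_le_mul (hMu y) (hh.dist_le_mul x y) dist_nonneg hMu0
  calc dist ((h * u) x) ((h * u) y) ≤ Mh * ((Ku : ℝ) * dist x y) + Mu * ((Kh : ℝ) * dist x y) := by
        refine key.trans (add_le_add b1 b2)
  _ = (Mh * (Ku : ℝ) + Mu * (Kh : ℝ)) * dist x y := by ring
  _ = ((⟨Mh * (Ku : ℝ) + Mu * (Kh : ℝ), h0⟩ : ℝ≥0) : ℝ) * dist x y := rfl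

theorem lipB_mul_lip0' [Nonempty X] {h u : X → ℝ} (hh : h ∈ LipB X) (hu : u ∈ Lip0 X) :
    h * u ∈ Lip0 X := by
  obtain ⟨⟨Kh, hKh⟩, Mh0, hMh0⟩ := hh
  obtain ⟨Mu, hMu0, hMu⟩ := lip0_bounded' hu
  obtain ⟨Ku, hKu⟩ := hu.1
  have hMh0' : ∀ x, |h x| ≤ max Mh0 0 := fun x => le_trans (hMh0 x) (le_max_left _ _)
  refine ⟨lipschitz_mul_of_bounded' hKh hKu (le_max_right _ _) hMu0 hMh0' hMu, ?_⟩
  refine hu.2.subset (closure_mono ?_)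
  intro x hx
  simp only [Function.mem_support, Pi.mul_apply] at hx
  exact fun h0 => hx (by rw [h0, mul_zero])

/-- The standard Lipschitz cutoff: equal to `1` on `{dist · x0 ≤ R}`, supported in
`closedBall x0 (R+1)`. -/
def cutoff' (x0 : X) (R : ℝ) : X → ℝ := fun y => max 0 (min 1 (R + 1 - dist y x0))

theorem cutoff'_lipschitz (x0 : X) (R : ℝ) : LipschitzWith 1 (cutoff' x0 R) := by
  have h1 : LipschitzWith 1 fun y : X => dist y x0 := LipschitzWith.dist_left x0
  have h2 : LipschitzWith 1 fun y : X => R + 1 - dist y x0 := by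
    have := (LipschitzWith.const (α := X) (R + 1)).sub h1
    simpa using this
  exact (h2.const_min 1).const_max 0

theorem cutoff'_mem_lip0 (x0 : X) (R : ℝ) : cutoff' x0 R ∈ Lip0 X := by
  refine ⟨⟨1, cutoff'_lipschitz x0 R⟩, ?_⟩
  refine (Metric.isBounded_closedBall (x := x0) (r := R + 1)).subset ?_
  have hsub : Function.support (cutoff' x0 R) ⊆ Metric.closedBall x0 (R + 1) := by
    intro y hy
    simp only [Function.mem_support] at hy
    by_contra hmem
    have hd : R + 1 < dist y x0 := by
      simpa [Metric.mem_closedBall, not_le] using hmem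
    apply hy
    have : min 1 (R + 1 - dist y x0) ≤ R + 1 - dist y x0 := min_le_right _ _
    have h0 : min 1 (R + 1 - dist y x0) ≤ 0 := by linarith
    simp only [cutoff', max_eq_left h0]
  exact (closure_minimal hsub Metric.isClosed_closedBall)

theorem cutoff'_eq_one {x0 : X} {R : ℝ} {y : X} (h : dist y x0 ≤ R) : cutoff' x0 R y = 1 := by
  have h1 : (1 : ℝ) ≤ R + 1 - dist y x0 := by linarith
  simp only [cutoff', min_eq_left h1, max_eq_right (by norm_num : (0:ℝ) ≤ 1)]

theorem cutoff'_nonneg (x0 : X) (R : ℝ) (y : X) : 0 ≤ cutoff' x0 R y := le_max_left _ _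

variable [MeasurableSpace X]

theorem mderiv_zero' (m : Measure X) (b : MDerivation X m) : b.toFun 0 =ᵐ[m] 0 := by
  have h := b.map_smul' 0 0 lip0_zero'
  have h0 : (0 : ℝ) • (0 : X → ℝ) = 0 := by simp
  rw [h0] at h
  filter_upwards [h] with x hx
  simpa using hx

theorem mderiv_locality_on' {m : Measure X} (b : MDerivation X m) {u v : X → ℝ}
    (hu : u ∈ Lip0 X) (hv : v ∈ Lip0 X) {U : Set X} (hU : IsOpen U)
    (heq : Set.EqOn u v U) : ∀ᵐ x ∂m, x ∈ U → b.toFun u x = b.toFun v x := by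
  obtain ⟨g, _, _, hloc⟩ := b.locality'
  have hw : u - v ∈ Lip0 X := lip0_sub' hu hv
  have hadd := b.map_add' v hv (u - v) hw
  have huv : v + (u - v) = u := by abel
  rw [huv] at hadd
  filter_upwards [hadd, hloc (u - v) hw] with x hx hbd hxU
  obtain ⟨r, hr, hball⟩ := Metric.isOpen_iff.1 hU x hxU
  have heq0 : Set.EqOn (u - v) (fun _ => (0 : ℝ)) (ball x r) := by
    intro y hy
    simp only [Pi.sub_apply, heq (hball hy), sub_self]
  have hz : lipA (u - v) x ≤ ((0 : ℝ≥0) : ℝ) :=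
    lipA_le_of_eqOn_ball' hr heq0 (LipschitzWith.const 0)
  have hz0 : lipA (u - v) x = 0 :=
    le_antisymm (by simpa using hz) (lipA_nonneg' _ _)
  have : b.toFun (u - v) x = 0 := by
    have : |b.toFun (u - v) x| ≤ 0 := by
      calc |b.toFun (u - v) x| ≤ g x * lipA (u - v) x := hbd
      _ = 0 := by rw [hz0, mul_zero]
    exact abs_eq_zero.1 (le_antisymm this (abs_nonneg _))
  have hxeq : b.toFun u x = b.toFun v x + b.toFun (u - v) x := hx
  rw [hxeq, this, add_zero]

theorem mderiv_eq_zero_outside' {m : Measure X} (b : MDerivation X m) {u : X → ℝ}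
    (hu : u ∈ Lip0 X) : ∀ᵐ x ∂m, x ∉ tsupport u → b.toFun u x = 0 := by
  have heq : Set.EqOn u (0 : X → ℝ) (tsupport u)ᶜ := fun y hy =>
    image_eq_zero_of_notMem_tsupport hy
  have h := mderiv_locality_on' b hu lip0_zero' (isClosed_tsupport u).isOpen_compl heq
  filter_upwards [h, mderiv_zero' m b] with x h1 h2 hx
  rw [h1 hx, h2]
  rfl

/-- The derivation `h · b` for a bounded Lipschitz function `h`. -/
def mulDeriv {X : Type*} [MetricSpace X] [MeasurableSpace X] [BorelSpace X]
    (m : Measure X) (h : X → ℝ) {Kh : ℝ≥0} (hKh : LipschitzWith Kh h)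
    {Mh : ℝ} (hMh0 : 0 ≤ Mh) (hMh : ∀ x, |h x| ≤ Mh) (b : MDerivation X m) :
    MDerivation X m where
  toFun u x := h x * b.toFun u x
  aemeasurable' f hf := (hKh.continuous.measurable.aemeasurable).mul (b.aemeasurable' f hf)
  map_add' f hf g hg := by
    filter_upwards [b.map_add' f hf g hg] with x hx
    simp only [Pi.add_apply] at hx ⊢
    rw [hx]; ring
  map_smul' c f hf := by
    filter_upwards [b.map_smul' c f hf] with x hx
    simp only [Pi.smul_apply, smul_eq_mul] at hx ⊢
    rw [hx]; ring
  leibniz' f hf g hg := by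
    filter_upwards [b.leibniz' f hf g hg] with x hx
    simp only [Pi.add_apply, Pi.mul_apply] at hx ⊢
    rw [hx]; ring
  locality' := by
    obtain ⟨g, hgm, hg0, hloc⟩ := b.locality'
    refine ⟨fun x => Mh * g x, hgm.const_mul Mh, ?_, fun f hf => ?_⟩
    · filter_upwards [hg0] with x hx; positivity
    · filter_upwards [hg0, hloc f hf] with x h0 hbd
      calc |h x * b.toFun f x| = |h x| * |b.toFun f x| := abs_mul _ _
      _ ≤ Mh * (g x * lipA f x) := mul_le_mul (hMh x) hbd (abs_nonneg _) hMh0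
      _ = Mh * g x * lipA f x := (mul_assoc _ _ _).symm

theorem exists_mul_deriv {X : Type*} [MetricSpace X] [MeasurableSpace X] [BorelSpace X]
    [Nonempty X] (m : Measure X) (q : ℝ≥0∞) {h : X → ℝ} (hh : h ∈ LipB X)
    {b : MDerivation X m} (hb : b ∈ DerSet m q q) :
    ∃ b' : MDerivation X m, b' ∈ DerSet m q q ∧
      b'.toFun = fun u x => h x * b.toFun u x := by
  classical
  obtain ⟨⟨gb, hgb_loc, hgb_q⟩, d, hd_q, hd_div⟩ := hb
  obtain ⟨hgb_m, hgb_0, hgb_bd⟩ := hgb_loc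
  obtain ⟨⟨Kh, hKh⟩, Mh0, hMh'⟩ := hh
  set Mh : ℝ := max Mh0 0 with hMh_def
  have hMhpos : 0 ≤ Mh := le_max_right _ _
  have hMh : ∀ x, |h x| ≤ Mh := fun x => le_trans (hMh' x) (le_max_left _ _)
  have hh_lipB : h ∈ LipB X := ⟨⟨Kh, hKh⟩, Mh0, hMh'⟩
  have hh_meas : Measurable h := hKh.continuous.measurable
  obtain x0 := Classical.arbitrary X
  set b' : MDerivation X m := mulDeriv m h hKh hMhpos hMh b with hb'_def
  -- cutoff multipliers
  set uk : ℕ → X → ℝ := fun k => h * cutoff' x0 ((k : ℝ) + 1) with huk_def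
  have hu_mem : ∀ k : ℕ, uk k ∈ Lip0 X := fun k =>
    lipB_mul_lip0' hh_lipB (cutoff'_mem_lip0 x0 _)
  have hF0 : ∀ k : ℕ, AEMeasurable (b.toFun (uk k)) m := fun k =>
    b.aemeasurable' (uk k) (hu_mem k)
  set F : ℕ → X → ℝ := fun k => (hF0 k).mk _ with hF_def
  have hF_meas : ∀ k, Measurable (F k) := fun k => (hF0 k).measurable_mk
  have hF : ∀ k, F k =ᵐ[m] b.toFun (uk k) := fun k => (hF0 k).ae_eq_mk.symm
  set idx : X → ℕ := fun x => ⌊dist x x0⌋₊ with hidx_def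
  set bh : X → ℝ := fun x => F (idx x) x with hbh_def
  have hdist_meas : Measurable fun x : X => dist x x0 :=
    (continuous_id.dist continuous_const).measurable
  have hbh_meas : Measurable bh := by
    intro t ht
    have heq : bh ⁻¹' t = ⋃ n : ℕ, {x | idx x = n} ∩ F n ⁻¹' t := by
      ext x
      simp only [Set.mem_preimage, Set.mem_iUnion, Set.mem_inter_iff, Set.mem_setOf_eq]
      constructor
      · intro hx; exact ⟨idx x, rfl, hx⟩
      · rintro ⟨n, rfl, hx⟩; exact hx
    rw [heq]
    refine MeasurableSet.iUnion fun n => MeasurableSet.inter ?_ ((hF_meas n) ht)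
    have : {x : X | idx x = n} = {x | (n : ℝ) ≤ dist x x0 ∧ dist x x0 < n + 1} := by
      ext x
      simp only [Set.mem_setOf_eq, hidx_def]
      rw [Nat.floor_eq_iff dist_nonneg]
    rw [this]
    exact (measurableSet_le measurable_const hdist_meas).inter
      (measurableSet_lt hdist_meas measurable_const)
  -- bh agrees with b(uk n) where dist < n+1
  have hkey : ∀ n : ℕ, ∀ᵐ x ∂m, dist x x0 < (n : ℝ) + 1 → bh x = b.toFun (uk n) x := by
    intro n
    have hall : ∀ᵐ x ∂m, ∀ k : ℕ,
        x ∈ ball x0 (((min k n : ℕ) : ℝ) + 1) → F k x = b.toFun (uk n) x := by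
      rw [ae_all_iff]
      intro k
      have heqOn : Set.EqOn (uk k) (uk n) (ball x0 (((min k n : ℕ) : ℝ) + 1)) := by
        intro y hy
        have hy' : dist y x0 < ((min k n : ℕ) : ℝ) + 1 := mem_ball.1 hy
        have hk : dist y x0 ≤ (k : ℝ) + 1 := by
          have : ((min k n : ℕ) : ℝ) ≤ (k : ℝ) := Nat.cast_le.2 (min_le_left _ _)
          linarith
        have hn : dist y x0 ≤ (n : ℝ) + 1 := by
          have : ((min k n : ℕ) : ℝ) ≤ (n : ℝ) := Nat.cast_le.2 (min_le_right _ _)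
          linarith
        show h y * cutoff' x0 ((k : ℝ) + 1) y = h y * cutoff' x0 ((n : ℝ) + 1) y
        rw [cutoff'_eq_one hk, cutoff'_eq_one hn]
      have hloc := mderiv_locality_on' b (hu_mem k) (hu_mem n) isOpen_ball heqOn
      filter_upwards [hF k, hloc] with x h1 h2 hx
      rw [h1, h2 hx]
    filter_upwards [hall] with x hx hdist
    refine hx (idx x) ?_
    rw [mem_ball]
    have hcast : ((min (idx x) n : ℕ) : ℝ) + 1 = min ((idx x : ℝ) + 1) ((n : ℝ) + 1) := by
      rw [Nat.cast_min, min_add_add_right]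
    rw [hcast]
    exact lt_min (Nat.lt_floor_add_one _) hdist
  -- bound on bh
  have hbh_bd : ∀ᵐ x ∂m, |bh x| ≤ (Kh : ℝ) * gb x := by
    have hall2 : ∀ᵐ x ∂m, ∀ k : ℕ, F k x = b.toFun (uk k) x ∧
        |b.toFun (uk k) x| ≤ gb x * lipA (uk k) x := by
      rw [ae_all_iff]
      exact fun k => (hF k).and (hgb_bd (uk k) (hu_mem k))
    filter_upwards [hall2, hgb_0] with x hx hg0
    obtain ⟨h1, h2⟩ := hx (idx x)
    have hrpos : 0 < (idx x : ℝ) + 1 - dist x x0 := by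
      have := Nat.lt_floor_add_one (dist x x0); simp only [hidx_def]; linarith
    have heqh : Set.EqOn (uk (idx x)) h (ball x ((idx x : ℝ) + 1 - dist x x0)) := by
      intro y hy
      have hy1 : dist y x < (idx x : ℝ) + 1 - dist x x0 := mem_ball.1 hy
      have hy' : dist y x0 ≤ (idx x : ℝ) + 1 := by
        have := dist_triangle y x x0; linarith
      show h y * cutoff' x0 ((idx x : ℝ) + 1) y = h y
      rw [cutoff'_eq_one hy', mul_one]
    have hlip := lipA_le_of_eqOn_ball' hrpos heqh hKh
    calc |bh x| = |b.toFun (uk (idx x)) x| := by rw [hbh_def]; simp only []; rw [h1]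
    _ ≤ gb x * lipA (uk (idx x)) x := h2
    _ ≤ gb x * (Kh : ℝ) := mul_le_mul_of_nonneg_left hlip hg0
    _ = (Kh : ℝ) * gb x := mul_comm _ _
  have hbh_q : MemLp bh q m := by
    refine MemLp.of_le (hgb_q.const_mul (Kh : ℝ)) hbh_meas.aestronglyMeasurable ?_
    filter_upwards [hbh_bd] with x hx
    rw [Real.norm_eq_abs, Real.norm_eq_abs]
    exact hx.trans (le_abs_self _)
  -- the divergence of b'
  set d' : X → ℝ := fun x => h x * d x + bh x with hd'_def
  have hmul_q : MemLp (fun x => h x * d x) q m := by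
    refine MemLp.of_le (hd_q.const_mul Mh)
      (hh_meas.aestronglyMeasurable.mul hd_q.aestronglyMeasurable) ?_
    refine Eventually.of_forall fun x => ?_
    rw [Real.norm_eq_abs, Real.norm_eq_abs, abs_mul, abs_mul, abs_of_nonneg hMhpos]
    exact mul_le_mul_of_nonneg_right (hMh x) (abs_nonneg _)
  have hd'_q : MemLp d' q m := hmul_q.add hbh_q
  refine ⟨b', ⟨⟨fun x => Mh * gb x,
      ⟨hgb_m.const_mul Mh, ?_, fun f hf => ?_⟩, hgb_q.const_mul Mh⟩,
      d', hd'_q, ⟨(hh_meas.aemeasurable.mul hd_div.1).add hbh_meas.aemeasurable,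
        fun f hf => ?_⟩⟩, rfl⟩
  · filter_upwards [hgb_0] with x hx; positivity
  · filter_upwards [hgb_0, hgb_bd f hf] with x h0 hbd
    calc |b'.toFun f x| = |h x| * |b.toFun f x| := abs_mul _ _
    _ ≤ Mh * (gb x * lipA f x) := mul_le_mul (hMh x) hbd (abs_nonneg _) hMhpos
    _ = Mh * gb x * lipA f x := (mul_assoc _ _ _).symm
  -- divergence conditions for the test function f
  obtain ⟨Rf, hRf⟩ := hf.2.subset_ball x0
  set N : ℕ := ⌈Rf⌉₊ with hN_def
  have hsubN : tsupport f ⊆ ball x0 (N : ℝ) :=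
    hRf.trans (ball_subset_ball (Nat.le_ceil Rf))
  have hfsupp : ∀ x, f x ≠ 0 → dist x x0 < (N : ℝ) := fun x hx =>
    mem_ball.1 (hsubN (subset_tsupport f hx))
  set u : X → ℝ := uk N with hu_def
  have hu : u ∈ Lip0 X := hu_mem N
  have hbf_int : Integrable (b.toFun f) m := (hd_div.2 f hf).1
  have hMh_norm : ∃ C, ∀ x, ‖h x‖ ≤ C := ⟨Mh, fun x => by rw [Real.norm_eq_abs]; exact hMh x⟩
  have goal1 : Integrable (fun x => h x * b.toFun f x) m :=
    hbf_int.bdd_mul hh_meas.aestronglyMeasurable (Eventually.of_forall hMh_norm.choose_spec)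
  obtain ⟨Mf, hMf0, hMf⟩ := lip0_bounded' hf
  have hf_cont : Continuous f := hf.1.choose_spec.continuous
  have hf_meas : AEStronglyMeasurable f m := hf_cont.aestronglyMeasurable
  have hMf_norm : ∃ C, ∀ x, ‖f x‖ ≤ C := ⟨Mf, fun x => by rw [Real.norm_eq_abs]; exact hMf x⟩
  have hbhf : (fun x => bh x * f x) =ᵐ[m] fun x => b.toFun u x * f x := by
    filter_upwards [hkey N] with x hx
    by_cases hfx : f x = 0
    · simp [hfx]
    · have hd1 : dist x x0 < (N : ℝ) + 1 := lt_trans (hfsupp x hfx) (by linarith)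
      rw [hx hd1]
  have hbuf_int : Integrable (fun x => b.toFun u x * f x) m := by
    have := ((hd_div.2 u hu).1).bdd_mul hf_meas (Eventually.of_forall hMf_norm.choose_spec)
    exact this.congr (Eventually.of_forall fun x => mul_comm _ _)
  have hbhf_int : Integrable (fun x => bh x * f x) m := hbuf_int.congr hbhf.symm
  have hhd_int : Integrable (fun x => h x * d x * f x) m := by
    have := ((hd_div.2 f hf).2.1).bdd_mul hh_meas.aestronglyMeasurable (Eventually.of_forall hMh_norm.choose_spec)
    exact this.congr (Eventually.of_forall fun x => by ring)
  have goal2 : Integrable (fun x => d' x * f x) m := by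
    refine (hhd_int.add hbhf_int).congr (Eventually.of_forall fun x => ?_)
    simp only [Pi.add_apply, hd'_def]; ring
  refine ⟨goal1, goal2, ?_⟩
  -- the integration by parts identity
  have S1 : (fun x => h x * b.toFun f x) =ᵐ[m] fun x => u x * b.toFun f x := by
    filter_upwards [mderiv_eq_zero_outside' b hf] with x hvan
    by_cases hx : dist x x0 ≤ (N : ℝ) + 1
    · show h x * b.toFun f x = (h x * cutoff' x0 ((N : ℝ) + 1) x) * b.toFun f x
      rw [cutoff'_eq_one hx, mul_one]
    · have hxn : x ∉ tsupport f := fun hmem =>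
        hx (le_trans (le_of_lt (mem_ball.1 (hsubN hmem))) (by linarith))
      show h x * b.toFun f x = u x * b.toFun f x
      rw [hvan hxn, mul_zero, mul_zero]
  have huf : u * f ∈ Lip0 X := lipB_mul_lip0' (lip0_mem_lipB' hu) hf
  have hbuf2_int : Integrable (b.toFun (u * f)) m := (hd_div.2 (u * f) huf).1
  have S3 : (-∫ x, b.toFun (u * f) x ∂m) = ∫ x, d x * (u * f) x ∂m := (hd_div.2 (u * f) huf).2.2
  have S2' : (fun x => u x * b.toFun f x) =ᵐ[m]
      fun x => b.toFun (u * f) x - b.toFun u x * f x := by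
    filter_upwards [b.leibniz' u hu f hf] with x hx
    simp only [Pi.add_apply, Pi.mul_apply] at hx
    rw [hx]; ring
  have S4 : ∀ x, d x * (u * f) x = h x * d x * f x := by
    intro x
    by_cases hfx : f x = 0
    · show d x * (u x * f x) = h x * d x * f x
      rw [hfx, mul_zero, mul_zero, mul_zero]
    · have hd1 : dist x x0 ≤ (N : ℝ) + 1 := le_of_lt (lt_trans (hfsupp x hfx) (by linarith))
      show d x * ((h x * cutoff' x0 ((N : ℝ) + 1) x) * f x) = h x * d x * f x
      rw [cutoff'_eq_one hd1]; ring
  have e5 : ∫ x, bh x * f x ∂m = ∫ x, b.toFun u x * f x ∂m := integral_congr_ae hbhf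
  show (-∫ x, h x * b.toFun f x ∂m) = ∫ x, d' x * f x ∂m
  calc (-∫ x, h x * b.toFun f x ∂m) = -∫ x, u x * b.toFun f x ∂m := by
        rw [integral_congr_ae S1]
  _ = -∫ x, (b.toFun (u * f) x - b.toFun u x * f x) ∂m := by rw [integral_congr_ae S2']
  _ = -((∫ x, b.toFun (u * f) x ∂m) - ∫ x, b.toFun u x * f x ∂m) := by
        rw [integral_sub hbuf2_int hbuf_int]
  _ = (-∫ x, b.toFun (u * f) x ∂m) + ∫ x, b.toFun u x * f x ∂m := by ring
  _ = (∫ x, d x * (u * f) x ∂m) + ∫ x, b.toFun u x * f x ∂m := by rw [S3]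
  _ = (∫ x, h x * d x * f x ∂m) + ∫ x, bh x * f x ∂m := by
        rw [integral_congr_ae (Eventually.of_forall S4), e5]
  _ = ∫ x, (h x * d x * f x + bh x * f x) ∂m := (integral_add hhd_int hbhf_int).symm
  _ = ∫ x, d' x * f x ∂m := by
        refine integral_congr_ae (Eventually.of_forall fun x => ?_)
        simp only [hd'_def]; ring

end Statement4Aux

/-- (Well posedness of `b(f)` for Sobolev functions.) If `L_f` and
`L̃_f` both satisfy the defining conditions of `W^{1,p}` for `f`, then
`L_f(b) = L̃_f(b)` `m`-a.e. for every `b ∈ Der^q_q`. -/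
theorem statement4 {X : Type*} [MetricSpace X] [MeasurableSpace X] [BorelSpace X]
    [TopologicalSpace.SeparableSpace X] [CompleteSpace X]
    (m : MeasureTheory.Measure X)
    (hm : ∀ s : Set X, Bornology.IsBounded s → m s < ∞)
    (p q : ℝ≥0∞) (hp1 : 1 ≤ p) (hpt : p ≠ ∞) (hpq : 1 / p + 1 / q = 1)
    (f : X → ℝ) (hf : MemLp f p m)
    (Lf Lf' : MDerivation X m → X → ℝ)
    (h1 : IsSobolevRep m p q f Lf) (h2 : IsSobolevRep m p q f Lf') :
    ∀ b ∈ DerSet m q q, Lf b =ᵐ[m] Lf' b := by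
  intro b hb
  rcases isEmpty_or_nonempty X with hX | hX
  · exact Eventually.of_forall fun x => (IsEmpty.false x).elim
  -- Step 1: ∫ h · (Lf b - Lf' b) = 0 for every bounded Lipschitz h
  have key : ∀ h' ∈ LipB X, ∫ x, h' x * (Lf b x - Lf' b x) ∂m = 0 := by
    intro h' hh'
    obtain ⟨b', hb', hb'fun⟩ := exists_mul_deriv m q hh' hb
    have hcond : ∀ g ∈ Lip0 X, b'.toFun g =ᵐ[m] fun x => h' x * b.toFun g x := by
      intro g _; rw [hb'fun]
    have e1 := h1.lipb_linear h' hh' b hb b' hb' hcond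
    have e2 := h2.lipb_linear h' hh' b hb b' hb' hcond
    obtain ⟨d', hd'q, hd'⟩ := hb'.2
    have i1 := h1.ibp b' hb' d' hd'
    have i2 := h2.ibp b' hb' d' hd'
    have int1 : Integrable (fun x => h' x * Lf b x) m := (h1.integrable b' hb').congr e1
    have int2 : Integrable (fun x => h' x * Lf' b x) m := (h2.integrable b' hb').congr e2
    have j1 : ∫ x, h' x * Lf b x ∂m = ∫ x, h' x * Lf' b x ∂m := by
      rw [← integral_congr_ae e1, ← integral_congr_ae e2, i1, i2]
    have hz : ∫ x, (h' x * Lf b x - h' x * Lf' b x) ∂m = 0 := by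
      rw [integral_sub int1 int2, j1, sub_self]
    rw [← hz]
    exact integral_congr_ae (Eventually.of_forall fun x => by ring)
  set u : X → ℝ := fun x => Lf b x - Lf' b x with hu_def
  have hu_int : Integrable u m := (h1.integrable b hb).sub (h2.integrable b hb)
  -- Step 2: ∫_s u = 0 for every closed set s
  have hclosed : ∀ s : Set X, IsClosed s → ∫ x in s, u x ∂m = 0 := by
    intro s hs
    rcases s.eq_empty_or_nonempty with rfl | hne
    · simp
    set hn : ℕ → X → ℝ := fun n x => max 0 (1 - n * Metric.infDist x s) with hhn
    have hn_mem : ∀ n, hn n ∈ LipB X := by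
      intro n
      refine ⟨⟨(n : ℝ≥0), LipschitzWith.of_dist_le_mul fun x y => ?_⟩, 1, fun x => ?_⟩
      · have h1' : dist (hn n x) (hn n y) ≤
            |(1 - n * Metric.infDist x s) - (1 - n * Metric.infDist y s)| := by
          simp only [hhn, Real.dist_eq]
          have := abs_max_sub_max_le_abs (1 - n * Metric.infDist x s)
            (1 - n * Metric.infDist y s) 0
          simpa [max_comm] using this
        have h2' : |(1 - n * Metric.infDist x s) - (1 - n * Metric.infDist y s)|
            = (n : ℝ) * |Metric.infDist x s - Metric.infDist y s| := by
          have e : (1 - n * Metric.infDist x s) - (1 - n * Metric.infDist y s)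
              = -((n : ℝ) * (Metric.infDist x s - Metric.infDist y s)) := by ring
          rw [e, abs_neg, abs_mul, Nat.abs_cast]
        have h3' : |Metric.infDist x s - Metric.infDist y s| ≤ dist x y := by
          have := (Metric.lipschitz_infDist_pt s).dist_le_mul x y
          rwa [Real.dist_eq, NNReal.coe_one, one_mul] at this
        calc dist (hn n x) (hn n y)
            ≤ (n : ℝ) * |Metric.infDist x s - Metric.infDist y s| := h1'.trans (le_of_eq h2')
        _ ≤ (n : ℝ) * dist x y := by
            exact mul_le_mul_of_nonneg_left h3' (by positivity)
        _ = ((n : ℝ≥0) : ℝ) * dist x y := by push_cast; ring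
      · rw [abs_le]
        constructor
        · have : (0:ℝ) ≤ hn n x := le_max_left _ _
          linarith
        · refine max_le (by norm_num) ?_
          have : 0 ≤ (n : ℝ) * Metric.infDist x s :=
            mul_nonneg (by positivity) Metric.infDist_nonneg
          linarith
    have hn_cont : ∀ n, Continuous (hn n) := fun n => ((hn_mem n).1.choose_spec).continuous
    have hbound : ∀ n, ∀ᵐ x ∂m, ‖hn n x * u x‖ ≤ |u x| := by
      intro n
      refine Eventually.of_forall fun x => ?_
      rw [Real.norm_eq_abs, abs_mul]
      have h1' : |hn n x| ≤ 1 := by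
        obtain ⟨_, M, hM⟩ := hn_mem n
        rw [abs_le]
        constructor
        · have : (0:ℝ) ≤ hn n x := le_max_left _ _
          linarith
        · refine max_le (by norm_num) ?_
          have : 0 ≤ (n : ℝ) * Metric.infDist x s :=
            mul_nonneg (by positivity) Metric.infDist_nonneg
          linarith
      calc |hn n x| * |u x| ≤ 1 * |u x| := mul_le_mul_of_nonneg_right h1' (abs_nonneg _)
      _ = |u x| := one_mul _
    have hlim : ∀ᵐ x ∂m, Tendsto (fun n => hn n x * u x) atTop (𝓝 (s.indicator u x)) := by
      refine Eventually.of_forall fun x => ?_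
      by_cases hx : x ∈ s
      · have hD : Metric.infDist x s = 0 := Metric.infDist_zero_of_mem hx
        have : (fun n : ℕ => hn n x * u x) = fun _ => u x := by
          funext n; simp [hhn, hD]
        rw [this, Set.indicator_of_mem hx]
        exact tendsto_const_nhds
      · have hD : 0 < Metric.infDist x s := (hs.notMem_iff_infDist_pos hne).1 hx
        rw [Set.indicator_of_notMem hx]
        have hev : ∀ᶠ n : ℕ in atTop, hn n x * u x = 0 := by
          filter_upwards [eventually_ge_atTop ⌈1 / Metric.infDist x s⌉₊] with n hngt
          have h1' : 1 / Metric.infDist x s ≤ (n : ℝ) :=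
            le_trans (Nat.le_ceil _) (Nat.cast_le.2 hngt)
          have h2' : 1 ≤ (n : ℝ) * Metric.infDist x s := by
            rw [div_le_iff₀ hD] at h1'
            linarith
          have : hn n x = 0 := by
            simp only [hhn]
            rw [max_eq_left (by linarith)]
          rw [this, zero_mul]
        exact Tendsto.congr' (by filter_upwards [hev] with n hn'; rw [hn'])
          tendsto_const_nhds
    have hDCT := tendsto_integral_of_dominated_convergence (μ := m)
      (F := fun n x => hn n x * u x) (f := fun x => s.indicator u x) (fun x => |u x|)
      (fun n => ((hn_cont n).aestronglyMeasurable).mul hu_int.1) hu_int.abs hbound hlim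
    have hzero : ∀ n : ℕ, ∫ x, hn n x * u x ∂m = 0 := fun n => key (hn n) (hn_mem n)
    simp only [hzero] at hDCT
    have h0 : (0:ℝ) = ∫ x, s.indicator u x ∂m := tendsto_nhds_unique tendsto_const_nhds hDCT
    rw [integral_indicator hs.measurableSet] at h0
    exact h0.symm
  -- Step 3: ∫_s u = 0 for every measurable set s
  have htotal : ∫ x, u x ∂m = 0 := by
    have := hclosed Set.univ isClosed_univ
    rwa [Measure.restrict_univ] at this
  have hall : ∀ s : Set X, MeasurableSet s → ∫ x in s, u x ∂m = 0 := by
    intro s hs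
    refine MeasurableSet.induction_on_open (C := fun t _ => ∫ x in t, u x ∂m = 0)
      ?_ ?_ ?_ s hs
    · intro U hU
      have hc := hclosed Uᶜ hU.isClosed_compl
      have hadd := integral_add_compl hU.measurableSet hu_int
      rw [htotal] at hadd
      linarith
    · intro t ht hCt
      have hadd := integral_add_compl ht hu_int
      rw [htotal, hCt] at hadd
      linarith
    · intro g hdisj hmeas hC
      rw [integral_iUnion hmeas hdisj hu_int.integrableOn]
      simp only [hC]
      exact tsum_zero
  -- Step 4: conclude u = 0 a.e.
  have humeas := hu_int.1
  set v : X → ℝ := humeas.mk u with hv_def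
  have hv_meas : StronglyMeasurable v := humeas.stronglyMeasurable_mk
  have huv : u =ᵐ[m] v := humeas.ae_eq_mk
  have hv_int : Integrable v m := hu_int.congr huv
  have hvzero : ∀ s : Set X, MeasurableSet s → ∫ x in s, v x ∂m = 0 := by
    intro s hs
    rw [← hall s hs]
    exact integral_congr_ae (ae_restrict_of_ae huv.symm)
  have hside1 : ∀ᵐ x ∂m, v x ≤ 0 := by
    set A := {x | 0 < v x} with hA
    have hAm : MeasurableSet A := measurableSet_lt measurable_const hv_meas.measurable
    have h0 : ∫ x in A, v x ∂m = 0 := hvzero A hAm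
    have hnn : 0 ≤ᵐ[m.restrict A] v :=
      (ae_restrict_iff' hAm).2 (Eventually.of_forall fun x hx => le_of_lt hx)
    have hveq := (setIntegral_eq_zero_iff_of_nonneg_ae hnn hv_int.integrableOn).1 h0
    have h2 := (ae_restrict_iff' hAm).1 hveq
    filter_upwards [h2] with x hx
    by_contra hc
    push_neg at hc
    have hxA : x ∈ A := hc
    have : v x = (0 : X → ℝ) x := hx hxA
    simp only [Pi.zero_apply] at this
    exact absurd this (ne_of_gt hc)
  have hside2 : ∀ᵐ x ∂m, 0 ≤ v x := by
    set B := {x | v x < 0} with hB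
    have hBm : MeasurableSet B := measurableSet_lt hv_meas.measurable measurable_const
    have h0 : ∫ x in B, (fun x => -v x) x ∂m = 0 := by
      rw [integral_neg, hvzero B hBm, neg_zero]
    have hnn : 0 ≤ᵐ[m.restrict B] fun x => -v x :=
      (ae_restrict_iff' hBm).2 (Eventually.of_forall fun x hx => by
        have hvx : v x < 0 := hx
        simp only [Pi.zero_apply]
        linarith)
    have hveq := (setIntegral_eq_zero_iff_of_nonneg_ae hnn
      (hv_int.neg.integrableOn)).1 h0
    have h2 := (ae_restrict_iff' hBm).1 hveq
    filter_upwards [h2] with x hx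
    by_contra hc
    push_neg at hc
    have hxB : x ∈ B := hc
    have : -v x = (0 : X → ℝ) x := hx hxB
    simp only [Pi.zero_apply, neg_eq_zero] at this
    exact absurd this (ne_of_lt hc)
  filter_upwards [huv, hside1, hside2] with x h1' h2' h3'
  have hvx : v x = 0 := le_antisymm h2' h3'
  have hux : u x = 0 := by rw [h1', hvx]
  have : Lf b x - Lf' b x = 0 := hux
  linarith

end DiMarino
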